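/- Let u,v,w ∈ S_n and let 1≤i<n with ℓ(s_i w)>ℓ(w). If ℓ(s_i v)<ℓ(v), then c_{u,v}^{s_i w} = −((1+βt_{i+1})/(t_i−t_{i+1}))·c_{u,v}^w|_{t_i↔t_{i+1}} + ((1+βt_i)/(t_i−t_{i+1}))·c_{u,v}^w + c_{u,s_i v}^w|_{t_i↔t_{i+1}}. If ℓ(s_i v)>ℓ(v), then c_{u,v}^{s_i w} = −((1+βt_i)/(t_i−t_{i+1}))·c_{u,v}^w|_{t_i↔t_{i+1}} + ((1+βt_i)/(t_i−t_{i+1}))·c_{u,v}^w. -/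

import Mathlib

open MvPolynomial

noncomputable section

namespace BPDPuzzle

/-- `x ⊖ y = (x - y)/(1 + β·y)`. -/
def ominus {K : Type*} [Field K] (β a b : K) : K := (a - b) / (1 + β * b)

/-- A permutation of `ℕ` lying in `S_∞`, i.e. fixing all sufficiently large integers. -/
def FinPerm (w : Equiv.Perm ℕ) : Prop := ∃ N : ℕ, ∀ j, N ≤ j → w j = j

/-- A permutation of `ℕ` lying in `S_n` (0-based positions `0, …, n-1`). -/
def InSn (n : ℕ) (w : Equiv.Perm ℕ) : Prop := ∀ j, n ≤ j → w j = j

/-- Coxeter length: the number of inversions. -/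
def len (w : Equiv.Perm ℕ) : ℕ := Set.ncard {p : ℕ × ℕ | p.1 < p.2 ∧ w p.2 < w p.1}

/-- The simple transposition `s_i`, exchanging the (0-based) positions `i` and `i+1`. -/
def sTr (i : ℕ) : Equiv.Perm ℕ := Equiv.swap i (i + 1)

/-- `u` and `v` have separated descents at position `k`, i.e.
`maxdes(u) ≤ k ≤ mindes(v)` (in 0-based conventions: `u` has no descent at any
0-based position `≥ k` and `v` has no descent at any 0-based position `< k-1`). -/
def SepDesc (k : ℕ) (u v : Equiv.Perm ℕ) : Prop :=
  (∀ i, k ≤ i → u i ≤ u (i + 1)) ∧ (∀ i, i + 1 < k → v i ≤ v (i + 1))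

/-- The longest element `n ⋯ 2 1` of `S_n`, extended by the identity. -/
def revPerm (n : ℕ) : Equiv.Perm ℕ where
  toFun j := if j < n then n - 1 - j else j
  invFun j := if j < n then n - 1 - j else j
  left_inv j := by dsimp only; split_ifs <;> omega
  right_inv j := by dsimp only; split_ifs <;> omega

/-- Exchange the values of a valuation at the indices `i` and `i+1`. -/
def swapVal {K : Type*} (t : ℕ → K) (i : ℕ) : ℕ → K :=
  fun j => if j = i then t (i + 1) else if j = i + 1 then t i else t j

/-- The defining properties of the family of double Grothendieck polynomials
`𝔊_w(x, t)`, viewed as a family of polynomials in the `x`-variables depending on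
a valuation `t` of the second set of variables:  the initial condition
`𝔊_{n⋯21}(x,t) = ∏_{i+j≤n} (x_i ⊖ t_j)` together with the Demazure recursion
`π_i 𝔊_w = 𝔊_{w s_i}` whenever `w(i) > w(i+1)` (the latter written with the
denominator `x_i - x_{i+1}` cleared). -/
def GrothFamily {K : Type*} [Field K] (β : K)
    (G : (ℕ → K) → Equiv.Perm ℕ → MvPolynomial ℕ K) : Prop :=
  ∀ t : ℕ → K, (∀ j, 1 + β * t j ≠ 0) →
    (∀ n : ℕ, G t (revPerm n) =
      ∏ i ∈ Finset.range n, ∏ j ∈ Finset.range (n - 1 - i),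
        C ((1 + β * t j)⁻¹) * (X i - C (t j))) ∧
    (∀ (w : Equiv.Perm ℕ) (i : ℕ), w (i + 1) < w i →
      (X i - X (i + 1)) * G t (w * sTr i) =
        (1 + C β * X (i + 1)) * G t w
          - (1 + C β * X i) * rename ⇑(Equiv.swap i (i + 1)) (G t w))

/-- The defining property of the structure constants `c_{u,v}^w(t,y)`:
`𝔊_u(x,y) · 𝔊_v(x,t) = Σ_w c_{u,v}^w(t,y) · 𝔊_w(x,t)`, the (finitely supported)
sum ranging over the permutations `w ∈ S_∞`. -/
def StructConsts {K : Type*} [Field K] (β : K)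
    (G : (ℕ → K) → Equiv.Perm ℕ → MvPolynomial ℕ K)
    (c : (ℕ → K) → (ℕ → K) → Equiv.Perm ℕ → Equiv.Perm ℕ → Equiv.Perm ℕ → K) : Prop :=
  ∀ t y : ℕ → K, (∀ j, 1 + β * t j ≠ 0) → (∀ j, 1 + β * y j ≠ 0) →
    ∀ u v : Equiv.Perm ℕ, FinPerm u → FinPerm v →
      {w : Equiv.Perm ℕ | c t y u v w ≠ 0}.Finite ∧
      (∀ w, ¬ FinPerm w → c t y u v w = 0) ∧
      G y u * G t v = ∑ᶠ w : Equiv.Perm ℕ, C (c t y u v w) * G t w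

/-! ### The lattice model / pipe puzzles -/

/-- A state of the `n × n` lattice model: labels in `{0, …, n}` on all horizontal
and vertical (half-)edges.  `sst.1 i j` is the `j`-th horizontal (half-)edge of row
`i` (`j = 0` being the left boundary and `j = n` the right boundary), and
`sst.2 i j` is the `i`-th vertical (half-)edge of column `j` (`i = 0` the top
boundary, `i = n` the bottom boundary). -/
abbrev GridState (n : ℕ) : Type :=
  (Fin n → Fin (n + 1) → Fin (n + 1)) × (Fin (n + 1) → Fin n → Fin (n + 1))

/-- The label on the north edge of the tile in row `i`, column `j`. -/
def labN {n : ℕ} (sst : GridState n) (i j : Fin n) : ℕ := (sst.2 i.castSucc j : ℕ)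
/-- The label on the east edge of the tile in row `i`, column `j`. -/
def labE {n : ℕ} (sst : GridState n) (i j : Fin n) : ℕ := (sst.1 i j.succ : ℕ)
/-- The label on the west edge of the tile in row `i`, column `j`. -/
def labW {n : ℕ} (sst : GridState n) (i j : Fin n) : ℕ := (sst.1 i j.castSucc : ℕ)
/-- The label on the south edge of the tile in row `i`, column `j`. -/
def labS {n : ℕ} (sst : GridState n) (i j : Fin n) : ℕ := (sst.2 i.succ j : ℕ)

/-- Boundary label `κ_u` on the right side (0-based row `i`, 1-based pipe labels). -/
def kappaLab (k : ℕ) (u : Equiv.Perm ℕ) (i : ℕ) : ℕ :=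
  if u⁻¹ i < k then u⁻¹ i + 1 else 0

/-- Boundary label `θ_v` on the top side (0-based column `j`, 1-based pipe labels). -/
def thetaLab (k : ℕ) (v : Equiv.Perm ℕ) (j : ℕ) : ℕ :=
  if k ≤ v⁻¹ j then v⁻¹ j + 1 else 0

/-- Boundary label `η_w` on the bottom side (0-based column `j`, 1-based pipe labels). -/
def etaLab (w : Equiv.Perm ℕ) (j : ℕ) : ℕ := w⁻¹ j + 1

/-- The boundary condition for pipe puzzles for `(u, v, w)`: left edges all `0`,
right edges `κ_u`, top edges `θ_v`, bottom edges `η_w`. -/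
def BoundaryCond (n k : ℕ) (u v w : Equiv.Perm ℕ) (sst : GridState n) : Prop :=
  (∀ i : Fin n, (sst.1 i 0 : ℕ) = 0) ∧
  (∀ i : Fin n, (sst.1 i (Fin.last n) : ℕ) = kappaLab k u (i : ℕ)) ∧
  (∀ j : Fin n, (sst.2 0 j : ℕ) = thetaLab k v (j : ℕ)) ∧
  (∀ j : Fin n, (sst.2 (Fin.last n) j : ℕ) = etaLab w (j : ℕ))

/-- The admissible local configurations (tiles) of a pipe puzzle, in terms of the
four edge labels `N, E, W, S` around a tile:  the empty tile, the vertical pipe,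
the horizontal pipe, the crossing (with the horizontal pipe carrying the smaller
label), the two elbows `⌟` and `⌐` (labels `≤ k` coming from the right side,
labels `> k` from the top side), and the bumping tiles (with the stated label
restrictions). -/
def LAdm (k N E W S : ℕ) : Prop :=
  (N = 0 ∧ E = 0 ∧ W = 0 ∧ S = 0) ∨
  (E = 0 ∧ W = 0 ∧ 0 < N ∧ N = S) ∨
  (N = 0 ∧ S = 0 ∧ 0 < E ∧ E = W) ∨
  (0 < E ∧ E = W ∧ E < N ∧ N = S) ∨
  (E = 0 ∧ S = 0 ∧ 0 < N ∧ N = W ∧ N ≤ k) ∨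
  (E = 0 ∧ S = 0 ∧ N = W ∧ k < N) ∨
  (N = 0 ∧ W = 0 ∧ 0 < E ∧ E = S ∧ E ≤ k) ∨
  (N = 0 ∧ W = 0 ∧ E = S ∧ k < E) ∨
  (0 < E ∧ E = S ∧ E < N ∧ N = W ∧ N ≤ k) ∨
  (k < E ∧ E = S ∧ E < N ∧ N = W) ∨
  (0 < N ∧ N = W ∧ N ≤ k ∧ E = S ∧ k < E)

/-- The admissible local configurations of a Schubert pipe puzzle (no bumping
tiles; crossings have the horizontal pipe carrying the smaller label). -/
def LAdm0 (N E W S : ℕ) : Prop :=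
  (N = 0 ∧ E = 0 ∧ W = 0 ∧ S = 0) ∨
  (E = 0 ∧ W = 0 ∧ 0 < N ∧ N = S) ∨
  (N = 0 ∧ S = 0 ∧ 0 < E ∧ E = W) ∨
  (0 < E ∧ E = W ∧ E < N ∧ N = S) ∨
  (E = 0 ∧ S = 0 ∧ 0 < N ∧ N = W) ∨
  (N = 0 ∧ W = 0 ∧ 0 < E ∧ E = S)

/-- The vertex weight `L(x; N, E, W, S)` of the lattice model (equivalently, the
weight of the corresponding pipe-puzzle tile), with spectral parameter `x`. -/
def Lwt {K : Type*} [Field K] (β : K) (k : ℕ) (x : K) (N E W S : ℕ) : K :=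
  if N = 0 ∧ E = 0 ∧ W = 0 ∧ S = 0 then x
  else if E = 0 ∧ W = 0 ∧ 0 < N ∧ N = S then 1
  else if N = 0 ∧ S = 0 ∧ 0 < E ∧ E = W then 1
  else if 0 < E ∧ E = W ∧ E < N ∧ N = S then 1
  else if E = 0 ∧ S = 0 ∧ 0 < N ∧ N = W ∧ N ≤ k then 1 + β * x
  else if E = 0 ∧ S = 0 ∧ N = W ∧ k < N then 1
  else if N = 0 ∧ W = 0 ∧ 0 < E ∧ E = S ∧ E ≤ k then 1
  else if N = 0 ∧ W = 0 ∧ E = S ∧ k < E then 1 + β * x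
  else if 0 < E ∧ E = S ∧ E < N ∧ N = W ∧ N ≤ k then β
  else if k < E ∧ E = S ∧ E < N ∧ N = W then β
  else if 0 < N ∧ N = W ∧ N ≤ k ∧ E = S ∧ k < E then β * (1 + β * x)
  else 0

/-- The set of pipe puzzles for `(u, v, w)` (with separated-descent parameter `k`),
encoded as admissible states of the lattice model. -/
def PP (n k : ℕ) (u v w : Equiv.Perm ℕ) : Set (GridState n) :=
  {sst | BoundaryCond n k u v w sst ∧
    ∀ i j : Fin n, LAdm k (labN sst i j) (labE sst i j) (labW sst i j) (labS sst i j)}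

/-- The set of Schubert pipe puzzles for `(u, v, w)`. -/
def PP0 (n k : ℕ) (u v w : Equiv.Perm ℕ) : Set (GridState n) :=
  {sst | BoundaryCond n k u v w sst ∧
    ∀ i j : Fin n, LAdm0 (labN sst i j) (labE sst i j) (labW sst i j) (labS sst i j)}

/-- The weight `wt(π)` of a pipe puzzle: the product over all tiles, the tile in
row `i` and column `j` having spectral parameter `t_j ⊖ y_i`. -/
def stateWt {K : Type*} [Field K] (β : K) (k : ℕ) (t y : ℕ → K) {n : ℕ}
    (sst : GridState n) : K :=
  ∏ i : Fin n, ∏ j : Fin n,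
    Lwt β k (ominus β (t (j : ℕ)) (y (i : ℕ)))
      (labN sst i j) (labE sst i j) (labW sst i j) (labS sst i j)

/-- The Schubert weight `wt₀(π)`: the product of `t_j - y_i` over the positions
`(i, j)` of the empty tiles. -/
def stateWt0 {K : Type*} [Field K] (t y : ℕ → K) {n : ℕ} (sst : GridState n) : K :=
  ∏ i : Fin n, ∏ j : Fin n,
    if labN sst i j = 0 ∧ labE sst i j = 0 ∧ labW sst i j = 0 ∧ labS sst i j = 0
    then t (j : ℕ) - y (i : ℕ) else 1


/-! ### Auxiliary lemmas -/

section Aux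

/-! ### sTr lemmas -/

lemma sTr_apply (i x : ℕ) : sTr i x = if x = i then i + 1 else if x = i + 1 then i else x := by
  simp [sTr, Equiv.swap_apply_def]

lemma sTr_mul_self (i : ℕ) : sTr i * sTr i = 1 := Equiv.swap_mul_self _ _

lemma sTr_mul_sTr_mul (i : ℕ) (σ : Equiv.Perm ℕ) : sTr i * (sTr i * σ) = σ := by
  rw [← mul_assoc, sTr_mul_self, one_mul]

lemma sTr_inv (i : ℕ) : (sTr i)⁻¹ = sTr i := by
  simp [sTr]

lemma sTr_lt_of_lt {i x y : ℕ} (h : x < y) (h2 : ¬(x = i ∧ y = i + 1)) :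
    sTr i x < sTr i y := by
  rw [sTr_apply, sTr_apply]
  split_ifs <;> omega

lemma sTr_lt_iff {i x y : ℕ} (h : x < y) :
    sTr i y < sTr i x ↔ x = i ∧ y = i + 1 := by
  rw [sTr_apply, sTr_apply]
  split_ifs <;> omega

lemma mul_sTr_inv_apply (σ : Equiv.Perm ℕ) (i x : ℕ) :
    (sTr i * σ)⁻¹ x = σ⁻¹ (sTr i x) := by
  simp [mul_inv_rev, sTr_inv]

/-! ### InSn lemmas -/

lemma InSn.mono {m m' : ℕ} {σ : Equiv.Perm ℕ} (h : InSn m σ) (hm : m ≤ m') : InSn m' σ :=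
  fun j hj => h j (le_trans hm hj)

lemma InSn.lt {m : ℕ} {σ : Equiv.Perm ℕ} (h : InSn m σ) {x : ℕ} (hx : x < m) : σ x < m := by
  by_contra hc
  push_neg at hc
  have := h (σ x) hc
  have := σ.injective this
  omega

lemma InSn.inv {m : ℕ} {σ : Equiv.Perm ℕ} (h : InSn m σ) : InSn m σ⁻¹ := by
  intro j hj
  have := h j hj
  exact σ.injective (by rw [Equiv.Perm.coe_inv, Equiv.apply_symm_apply, this])

lemma InSn.inv_lt {m : ℕ} {σ : Equiv.Perm ℕ} (h : InSn m σ) {x : ℕ} (hx : x < m) :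
    σ⁻¹ x < m := h.inv.lt hx

lemma InSn.sTr_mul {m i : ℕ} {σ : Equiv.Perm ℕ} (h : InSn m σ) (hi : i + 1 < m) :
    InSn m (sTr i * σ) := by
  intro j hj
  have h1 := h j hj
  simp only [Equiv.Perm.mul_apply, h1, sTr_apply]
  split_ifs <;> omega

lemma InSn.mul_sTr {m i : ℕ} {σ : Equiv.Perm ℕ} (h : InSn m σ) (hi : i + 1 < m) :
    InSn m (σ * sTr i) := by
  intro j hj
  have : sTr i j = j := by rw [sTr_apply]; split_ifs <;> omega
  simp only [Equiv.Perm.mul_apply, this]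
  exact h j hj

lemma FinPerm.of_InSn {m : ℕ} {σ : Equiv.Perm ℕ} (h : InSn m σ) : FinPerm σ := ⟨m, h⟩

lemma FinPerm.toInSn {σ : Equiv.Perm ℕ} (h : FinPerm σ) : ∃ m, InSn m σ := h

/-! ### swapVal lemmas -/

lemma swapVal_self {K : Type*} (t : ℕ → K) (i : ℕ) : swapVal t i i = t (i + 1) := by
  simp [swapVal]

lemma swapVal_succ {K : Type*} (t : ℕ → K) (i : ℕ) : swapVal t i (i + 1) = t i := by
  simp [swapVal]

lemma swapVal_other {K : Type*} (t : ℕ → K) {i j : ℕ} (h1 : j ≠ i) (h2 : j ≠ i + 1) :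
    swapVal t i j = t j := by
  simp [swapVal, h1, h2]

lemma swapVal_swapVal {K : Type*} (t : ℕ → K) (i : ℕ) : swapVal (swapVal t i) i = t := by
  funext j
  by_cases h1 : j = i
  · subst h1; rw [swapVal_self, swapVal_succ]
  by_cases h2 : j = i + 1
  · subst h2; rw [swapVal_succ, swapVal_self]
  · rw [swapVal_other _ h1 h2, swapVal_other _ h1 h2]

lemma swapVal_eq_comp {K : Type*} (t : ℕ → K) (i : ℕ) : swapVal t i = t ∘ (sTr i) := by
  funext j
  by_cases h1 : j = i
  · subst h1; simp [swapVal_self, sTr_apply]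
  by_cases h2 : j = i + 1
  · subst h2; simp [swapVal_succ, sTr_apply]
  · simp [swapVal_other _ h1 h2, sTr_apply, h1, h2]

lemma swapVal_ne {K : Type*} [Field K] {β : K} {t : ℕ → K} (ht : ∀ j, 1 + β * t j ≠ 0)
    (i : ℕ) : ∀ j, 1 + β * swapVal t i j ≠ 0 := by
  intro j
  rw [swapVal_eq_comp]
  exact ht _


/-! ### length via Finsets -/

open Finset in
def invF (m : ℕ) (σ : Equiv.Perm ℕ) : Finset (ℕ × ℕ) :=
  (range m ×ˢ range m).filter (fun p => p.1 < p.2 ∧ σ p.2 < σ p.1)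

open Finset in
lemma len_eq_invF {m : ℕ} {σ : Equiv.Perm ℕ} (h : InSn m σ) : len σ = (invF m σ).card := by
  rw [len, ← Set.ncard_coe_finset]
  congr 1
  ext ⟨p, q⟩
  simp only [Set.mem_setOf_eq, coe_filter, mem_product, mem_range, invF, Set.mem_setOf_eq,
    mem_coe, mem_filter]
  constructor
  · rintro ⟨h1, h2⟩
    refine ⟨⟨?_, ?_⟩, h1, h2⟩
    · by_contra hc; push_neg at hc
      have hq : m ≤ q := le_trans hc (le_of_lt h1)
      have e1 := h q hq
      have e2 := h p hc
      omega
    · by_contra hc; push_neg at hc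
      rw [h q hc] at h2
      by_cases hp : p < m
      · have := h.lt hp; omega
      · push_neg at hp; have := h p hp; omega
  · rintro ⟨_, h1, h2⟩; exact ⟨h1, h2⟩

open Finset in
lemma invF_sTr_mul {m i : ℕ} {σ : Equiv.Perm ℕ} (h : InSn m σ) (hi : i + 1 < m)
    (hlt : σ⁻¹ i < σ⁻¹ (i + 1)) :
    invF m (sTr i * σ) = insert (σ⁻¹ i, σ⁻¹ (i + 1)) (invF m σ) := by
  ext ⟨p, q⟩
  simp only [invF, mem_insert, mem_filter, mem_product, mem_range, Prod.mk.injEq]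
  constructor
  · rintro ⟨⟨hp, hq⟩, hpq, hlt2⟩
    simp only [Equiv.Perm.mul_apply] at hlt2
    rcases lt_trichotomy (σ p) (σ q) with hc | hc | hc
    · -- ascent of σ; sTr flipped it, so σ p = i, σ q = i+1
      have := (sTr_lt_iff hc).1 hlt2
      left
      constructor
      · rw [← this.1, Equiv.Perm.coe_inv, Equiv.symm_apply_apply]
      · rw [← this.2, Equiv.Perm.coe_inv, Equiv.symm_apply_apply]
    · exact absurd (σ.injective hc) (by omega)
    · right; exact ⟨⟨hp, hq⟩, hpq, hc⟩
  · rintro (⟨h1, h2⟩ | ⟨⟨hp, hq⟩, hpq, hlt2⟩)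
    · subst h1; subst h2
      refine ⟨⟨h.inv_lt (by omega), h.inv_lt (by omega)⟩, hlt, ?_⟩
      simp only [Equiv.Perm.mul_apply, Equiv.Perm.coe_inv, Equiv.apply_symm_apply]
      rw [sTr_apply, sTr_apply]
      split_ifs <;> omega
    · refine ⟨⟨hp, hq⟩, hpq, ?_⟩
      simp only [Equiv.Perm.mul_apply]
      apply sTr_lt_of_lt hlt2
      rintro ⟨e1, e2⟩
      -- σ q = i, σ p = i + 1 : then σ⁻¹ i = q > p = σ⁻¹ (i+1), contradicting hlt
      have : σ⁻¹ i = q := by rw [← e1, Equiv.Perm.coe_inv, Equiv.symm_apply_apply]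
      have : σ⁻¹ (i+1) = p := by rw [← e2, Equiv.Perm.coe_inv, Equiv.symm_apply_apply]
      omega

lemma len_sTr_mul {i : ℕ} {σ : Equiv.Perm ℕ} (h : FinPerm σ)
    (hlt : σ⁻¹ i < σ⁻¹ (i + 1)) : len (sTr i * σ) = len σ + 1 := by
  obtain ⟨m0, hm0⟩ := h
  set m := max m0 (i + 2) with hm
  have hσ : InSn m σ := InSn.mono hm0 (le_max_left _ _)
  have hi : i + 1 < m := by omega
  rw [len_eq_invF (hσ.sTr_mul hi), len_eq_invF hσ, invF_sTr_mul hσ hi hlt,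
    Finset.card_insert_of_notMem]
  simp only [invF, Finset.mem_filter, not_and]
  intro _ _
  simp [Equiv.Perm.coe_inv, Equiv.apply_symm_apply]

lemma len_sTr_mul' {i : ℕ} {σ : Equiv.Perm ℕ} (h : FinPerm σ)
    (hlt : σ⁻¹ (i + 1) < σ⁻¹ i) : len σ = len (sTr i * σ) + 1 := by
  have h2 : FinPerm (sTr i * σ) := by
    obtain ⟨m0, hm0⟩ := h
    exact ⟨max m0 (i+2), (InSn.mono hm0 (le_max_left _ _)).sTr_mul (by omega)⟩
  have key := len_sTr_mul h2 (i := i) ?_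
  · rwa [sTr_mul_sTr_mul] at key
  · rw [mul_sTr_inv_apply, mul_sTr_inv_apply, sTr_apply, sTr_apply]
    split_ifs <;> omega

lemma inv_lt_of_len_lt {i : ℕ} {σ : Equiv.Perm ℕ} (h : FinPerm σ)
    (hl : len σ < len (sTr i * σ)) : σ⁻¹ i < σ⁻¹ (i + 1) := by
  rcases lt_trichotomy (σ⁻¹ i) (σ⁻¹ (i+1)) with hc | hc | hc
  · exact hc
  · exact absurd (σ⁻¹.injective hc) (by omega)
  · have := len_sTr_mul' h hc; omega

lemma inv_gt_of_len_gt {i : ℕ} {σ : Equiv.Perm ℕ} (h : FinPerm σ)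
    (hl : len (sTr i * σ) < len σ) : σ⁻¹ (i + 1) < σ⁻¹ i := by
  rcases lt_trichotomy (σ⁻¹ i) (σ⁻¹ (i+1)) with hc | hc | hc
  · have := len_sTr_mul h hc; omega
  · exact absurd (σ⁻¹.injective hc) (by omega)
  · exact hc


lemma revPerm_apply (n j : ℕ) : revPerm n j = if j < n then n - 1 - j else j := rfl

lemma sTr_sTr (i x : ℕ) : sTr i (sTr i x) = x := by
  rw [sTr_apply, sTr_apply]; split_ifs <;> omega

open Finset in
def ascF (m : ℕ) (σ : Equiv.Perm ℕ) : Finset (ℕ × ℕ) :=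
  (range m ×ˢ range m).filter (fun p => p.1 < p.2 ∧ σ p.1 < σ p.2)

open Finset in
lemma ascF_mul_sTr {m j : ℕ} (σ : Equiv.Perm ℕ) (hj : j + 1 < m) (ha : σ j < σ (j + 1)) :
    (ascF m (σ * sTr j)).card < (ascF m σ).card := by
  have hsmem : ∀ x, x < m → sTr j x < m := by
    intro x hx; rw [sTr_apply]; split_ifs <;> omega
  have hmem : (j, j+1) ∈ ascF m σ := by
    simp only [ascF, mem_filter, mem_product, mem_range]
    exact ⟨⟨by omega, hj⟩, by omega, ha⟩
  have hcard : (ascF m (σ * sTr j)).card = ((ascF m σ).erase (j, j+1)).card := by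
    apply Finset.card_nbij' (fun p => (sTr j p.1, sTr j p.2)) (fun p => (sTr j p.1, sTr j p.2))
    · rintro ⟨p, q⟩ (hm : (p, q) ∈ ascF m (σ * sTr j))
      simp only [mem_coe, ascF, mem_filter, mem_product, mem_range] at hm
      simp only [Equiv.Perm.mul_apply] at hm
      obtain ⟨⟨hp, hq⟩, hpq, hlt⟩ := hm
      have hne : ¬(p = j ∧ q = j + 1) := by
        rintro ⟨rfl, rfl⟩
        have e1 : sTr p p = p + 1 := by rw [sTr_apply]; simp
        have e2 : sTr p (p+1) = p := by rw [sTr_apply]; split_ifs <;> omega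
        rw [e1, e2] at hlt; omega
      have hlt2 : sTr j p < sTr j q := sTr_lt_of_lt hpq hne
      show (sTr j p, sTr j q) ∈ (ascF m σ).erase (j, j+1)
      simp only [mem_coe, mem_erase, ascF, mem_filter, mem_product, mem_range, Prod.mk.injEq]
      refine ⟨?_, ⟨hsmem p hp, hsmem q hq⟩, hlt2, hlt⟩
      intro hee
      rw [Prod.mk.injEq] at hee
      obtain ⟨e1, e2⟩ := hee
      have : p = j + 1 := by rw [← sTr_sTr j p, e1, sTr_apply]; simp
      have : q = j := by rw [← sTr_sTr j q, e2, sTr_apply]; split_ifs <;> omega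
      omega
    · rintro ⟨p, q⟩ (hm : (p, q) ∈ (ascF m σ).erase (j, j+1))
      simp only [mem_coe, mem_erase, ascF, mem_filter, mem_product, mem_range, Prod.mk.injEq] at hm
      obtain ⟨hne, ⟨hp, hq⟩, hpq, hlt⟩ := hm
      show (sTr j p, sTr j q) ∈ ascF m (σ * sTr j)
      simp only [mem_coe, ascF, mem_filter, mem_product, mem_range]
      simp only [Equiv.Perm.mul_apply, sTr_sTr]
      refine ⟨⟨hsmem p hp, hsmem q hq⟩, sTr_lt_of_lt hpq ?_, hlt⟩
      rintro ⟨e1, e2⟩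
      exact hne (by rw [e1, e2])
    · rintro ⟨p, q⟩ _; simp [sTr_sTr]
    · rintro ⟨p, q⟩ _; simp [sTr_sTr]
  calc (ascF m (σ * sTr j)).card = ((ascF m σ).erase (j, j+1)).card := hcard
    _ < (ascF m σ).card := card_erase_lt_of_mem hmem

lemma eq_revPerm {m : ℕ} {σ : Equiv.Perm ℕ} (h : InSn m σ)
    (hdec : ∀ j, j + 1 < m → σ (j + 1) < σ j) : σ = revPerm m := by
  have hub : ∀ p, p < m → σ p ≤ m - 1 - p := by
    intro p
    induction p with
    | zero => intro h0; have := h.lt h0; omega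
    | succ p ih =>
      intro hp
      have h1 := ih (by omega)
      have h2 := hdec p (by omega)
      omega
  have hlb : ∀ k p, p < m → m - 1 - p = k → k ≤ σ p := by
    intro k
    induction k with
    | zero => intro p _ _; omega
    | succ k ih =>
      intro p hp hk
      have hp1 : p + 1 < m := by omega
      have := ih (p+1) hp1 (by omega)
      have := hdec p hp1
      omega
  ext x
  rw [revPerm_apply]
  split_ifs with hx
  · have := hub x hx
    have := hlb (m - 1 - x) x hx rfl
    omega
  · exact h x (by omega)


lemma prod_swapVal {K M : Type*} [CommMonoid M] (t : ℕ → K) {i L : ℕ} (h : i + 1 < L)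
    (g : K → M) :
    ∏ q ∈ Finset.range L, g (swapVal t i q) = ∏ q ∈ Finset.range L, g (t q) := by
  have hmem : ∀ x, x < L → sTr i x < L := by
    intro x hx; rw [sTr_apply]; split_ifs <;> omega
  have hval : ∀ a, swapVal t i a = t (sTr i a) := by
    intro a
    rw [sTr_apply]
    unfold swapVal
    split_ifs <;> rfl
  refine Finset.prod_nbij' (fun q => sTr i q) (fun q => sTr i q) ?_ ?_ ?_ ?_ ?_
  · intro a ha; simp only [Finset.mem_range] at *; exact hmem a ha
  · intro a ha; simp only [Finset.mem_range] at *; exact hmem a ha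
  · intro a _; exact sTr_sTr i a
  · intro a _; exact sTr_sTr i a
  · intro a _
    show g (swapVal t i a) = g (t (sTr i a))
    rw [hval]

lemma rename_swap_swap {K : Type*} [CommSemiring K] (a b : ℕ) (p : MvPolynomial ℕ K) :
    rename ⇑(Equiv.swap a b) (rename ⇑(Equiv.swap a b) p) = p := by
  rw [rename_rename]
  have : ⇑(Equiv.swap a b) ∘ ⇑(Equiv.swap a b) = id := by
    funext x; simp [Equiv.swap_apply_self]
  rw [this, rename_id, AlgHom.id_apply]

variable {K : Type*} [Field K] {β : K} {G : (ℕ → K) → Equiv.Perm ℕ → MvPolynomial ℕ K}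

lemma X_sub_X_ne (a b : ℕ) (h : a ≠ b) : (X a - X b : MvPolynomial ℕ K) ≠ 0 :=
  sub_ne_zero_of_ne (fun hc => h (X_injective hc))

lemma key_base (hG : GrothFamily β G) {m i : ℕ} (hi : i + 1 < m)
    (t : ℕ → K) (ht : ∀ j, 1 + β * t j ≠ 0) :
    C (1 + β * t (i+1)) * G (swapVal t i) (revPerm m) =
      C (1 + β * t i) * G t (revPerm m) + C (t i - t (i+1)) * G t (sTr i * revPerm m) := by
  classical
  set s := swapVal t i with hs_def
  have hs : ∀ j, 1 + β * s j ≠ 0 := swapVal_ne ht i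
  set j := m - 2 - i with hj_def
  have hjm : j + 1 < m := by omega
  have hij : m - 1 - j = i + 1 := by omega
  have hij1 : m - 1 - (j+1) = i := by omega
  have hperm : revPerm m * sTr j = sTr i * revPerm m := by
    ext x
    simp only [Equiv.Perm.mul_apply]
    rw [sTr_apply, revPerm_apply, revPerm_apply, sTr_apply]
    split_ifs <;> omega
  have hdesc : revPerm m (j + 1) < revPerm m j := by
    rw [revPerm_apply, revPerm_apply]
    split_ifs <;> omega
  have hrec := (hG t ht).2 (revPerm m) j hdesc
  rw [hperm] at hrec
  have hjmem : j ∈ Finset.range m := by simp; omega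
  have hj1mem : j + 1 ∈ (Finset.range m).erase j := by simp; omega
  set R : MvPolynomial ℕ K :=
    ∏ p ∈ ((Finset.range m).erase j).erase (j+1), ∏ q ∈ Finset.range (m - 1 - p),
      C ((1 + β * t q)⁻¹) * (X p - C (t q)) with hR_def
  set W : MvPolynomial ℕ K :=
    (∏ q ∈ Finset.range i, C ((1 + β * t q)⁻¹) * (X j - C (t q))) *
      ((∏ q ∈ Finset.range i, C ((1 + β * t q)⁻¹) * (X (j+1) - C (t q))) * R) with hW_def
  have split_t : G t (revPerm m) = C ((1 + β * t i)⁻¹) * (X j - C (t i)) * W := by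
    rw [(hG t ht).1 m]
    rw [← Finset.mul_prod_erase _ _ hjmem, ← Finset.mul_prod_erase _ _ hj1mem]
    rw [hij, hij1, Finset.prod_range_succ, hW_def, hR_def]
    ring
  have split_s : G s (revPerm m) = C ((1 + β * t (i+1))⁻¹) * (X j - C (t (i+1))) * W := by
    rw [(hG s hs).1 m]
    rw [← Finset.mul_prod_erase _ _ hjmem, ← Finset.mul_prod_erase _ _ hj1mem]
    rw [hij, hij1, Finset.prod_range_succ]
    have e1 : ∀ q ∈ Finset.range i,
        (C ((1 + β * s q)⁻¹) * (X j - C (s q)) : MvPolynomial ℕ K) =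
          C ((1 + β * t q)⁻¹) * (X j - C (t q)) := by
      intro q hq
      simp only [Finset.mem_range] at hq
      rw [hs_def, swapVal_other t (by omega) (by omega)]
    have e2 : ∀ q ∈ Finset.range i,
        (C ((1 + β * s q)⁻¹) * (X (j+1) - C (s q)) : MvPolynomial ℕ K) =
          C ((1 + β * t q)⁻¹) * (X (j+1) - C (t q)) := by
      intro q hq
      simp only [Finset.mem_range] at hq
      rw [hs_def, swapVal_other t (by omega) (by omega)]
    rw [Finset.prod_congr rfl e1, Finset.prod_congr rfl e2]
    have e3 : s i = t (i + 1) := swapVal_self t i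
    rw [e3]
    have e4 : (∏ p ∈ ((Finset.range m).erase j).erase (j+1),
        ∏ q ∈ Finset.range (m - 1 - p), (C ((1 + β * s q)⁻¹) * (X p - C (s q)) : MvPolynomial ℕ K)) = R := by
      rw [hR_def]
      apply Finset.prod_congr rfl
      intro p hp
      simp only [Finset.mem_erase, Finset.mem_range] at hp
      obtain ⟨hp1, hp2, hp3⟩ := hp
      by_cases hpj : p < j
      · rw [hs_def]
        exact prod_swapVal t (by omega) (fun z => C ((1 + β * z)⁻¹) * (X p - C z))
      · apply Finset.prod_congr rfl
        intro q hq
        simp only [Finset.mem_range] at hq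
        rw [hs_def, swapVal_other t (by omega) (by omega)]
    rw [e4, hW_def]
    ring
  have hrn : rename ⇑(Equiv.swap j (j+1)) (G t (revPerm m)) =
      C ((1 + β * t i)⁻¹) * (X (j+1) - C (t i)) * W := by
    rw [split_t, hW_def, hR_def]
    simp only [map_mul, map_prod, map_sub, rename_C, rename_X, Equiv.swap_apply_left,
      Equiv.swap_apply_right]
    have e4 : ∀ p ∈ ((Finset.range m).erase j).erase (j+1),
        (∏ q ∈ Finset.range (m - 1 - p),
          (C ((1 + β * t q)⁻¹) * (X ((Equiv.swap j (j+1)) p) - C (t q)) : MvPolynomial ℕ K)) =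
        ∏ q ∈ Finset.range (m - 1 - p), C ((1 + β * t q)⁻¹) * (X p - C (t q)) := by
      intro p hp
      simp only [Finset.mem_erase] at hp
      rw [Equiv.swap_apply_of_ne_of_ne hp.2.1 hp.1]
    rw [Finset.prod_congr rfl e4]
    ring
  have hXD : (X j - X (j+1) : MvPolynomial ℕ K) ≠ 0 := X_sub_X_ne _ _ (by omega)
  apply mul_left_cancel₀ hXD
  rw [hrn, split_t] at hrec
  rw [split_s, split_t]
  have hu : (1 + C β * C (t i) : MvPolynomial ℕ K) * C ((1 + β * t i)⁻¹) = 1 := by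
    rw [show (1 + C β * C (t i) : MvPolynomial ℕ K) = C (1 + β * t i) by
      rw [map_add, map_one, map_mul]]
    rw [← map_mul, mul_inv_cancel₀ (ht i), map_one]
  have hu' : (1 + C β * C (t (i+1)) : MvPolynomial ℕ K) * C ((1 + β * t (i+1))⁻¹) = 1 := by
    rw [show (1 + C β * C (t (i+1)) : MvPolynomial ℕ K) = C (1 + β * t (i+1)) by
      rw [map_add, map_one, map_mul]]
    rw [← map_mul, mul_inv_cancel₀ (ht (i+1)), map_one]
  have hCa : (C (1 + β * t i) : MvPolynomial ℕ K) = 1 + C β * C (t i) := by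
    rw [map_add, map_one, map_mul]
  have hCa' : (C (1 + β * t (i+1)) : MvPolynomial ℕ K) = 1 + C β * C (t (i+1)) := by
    rw [map_add, map_one, map_mul]
  have hCd : (C (t i - t (i+1)) : MvPolynomial ℕ K) = C (t i) - C (t (i+1)) := by
    rw [map_sub]
  rw [hCa, hCa', hCd]
  linear_combination (-(C (t i) - C (t (i+1)))) * hrec
    + ((X j - X (j+1)) * (X j - C (t (i+1))) * W) * hu'
    - ((X j - X (j+1)) * (X j - C (t (i+1))) * W) * hu

lemma revPerm_inv (m : ℕ) : (revPerm m)⁻¹ = revPerm m := rfl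

lemma key_rev (hG : GrothFamily β G) {m i : ℕ} (hi : i + 1 < m)
    (t : ℕ → K) (ht : ∀ j, 1 + β * t j ≠ 0) :
    ((revPerm m)⁻¹ i < (revPerm m)⁻¹ (i+1) →
      G (swapVal t i) (revPerm m) = G t (revPerm m)) ∧
    ((revPerm m)⁻¹ (i+1) < (revPerm m)⁻¹ i →
      C (1 + β * t (i+1)) * G (swapVal t i) (revPerm m) =
        C (1 + β * t i) * G t (revPerm m) + C (t i - t (i+1)) * G t (sTr i * revPerm m)) := by
  constructor
  · intro hA
    exfalso
    rw [revPerm_inv, revPerm_apply, revPerm_apply] at hA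
    split_ifs at hA <;> omega
  · intro _
    exact key_base hG hi t ht

section calcLemmas

variable {D P0 P1 CB A1 A2 Dd Gsσ Gtσ Gsτ Gtτ rGsτ rGtτ rGtσ Gtρ rGtρ Gsiσ : MvPolynomial ℕ K}

lemma calc_subA (hrs : D * Gsσ = P1 * Gsτ - P0 * rGsτ)
    (hrt : D * Gtσ = P1 * Gtτ - P0 * rGtτ)
    (hAs : Gsτ = Gtτ) (hAr : rGsτ = rGtτ) :
    D * Gsσ = D * Gtσ := by
  linear_combination hrs - hrt + P1 * hAs - P0 * hAr

lemma calc_subB (hrs : D * Gsσ = P1 * Gsτ - P0 * rGsτ)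
    (hrt : D * Gtσ = P1 * Gtτ - P0 * rGtτ)
    (hBt : A2 * Gsτ = A1 * Gtτ + Dd * Gtσ)
    (hBr : A2 * rGsτ = A1 * rGtτ + Dd * Gtσ)
    (hD : P1 - P0 = -(CB * D))
    (ha : A1 - Dd * CB = A2) :
    A2 * (D * Gsσ) = A2 * (D * Gtσ) := by
  linear_combination A2 * hrs - A1 * hrt + P1 * hBt - P0 * hBr + (Dd * Gtσ) * hD
    + (D * Gtσ) * ha

lemma calc_caseB (hrs : D * Gsσ = P1 * Gsτ - P0 * rGsτ)
    (hrt : D * Gtσ = P1 * Gtτ - P0 * rGtτ)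
    (hrρ : D * Gsiσ = P1 * Gtρ - P0 * rGtρ)
    (hBt : A2 * Gsτ = A1 * Gtτ + Dd * Gtρ)
    (hBr : A2 * rGsτ = A1 * rGtτ + Dd * rGtρ) :
    D * (A2 * Gsσ) = D * (A1 * Gtσ + Dd * Gsiσ) := by
  linear_combination A2 * hrs - A1 * hrt - Dd * hrρ + P1 * hBt - P0 * hBr

lemma calc_sym (hrt : D * Gtσ = P1 * Gtτ - P0 * rGtτ)
    (h2 : -D * rGtσ = P0 * rGtτ - P1 * Gtτ) :
    D * rGtσ = D * Gtσ := by
  linear_combination -h2 - hrt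

end calcLemmas

lemma key_main (hG : GrothFamily β G) {m i : ℕ} (hi : i + 1 < m) :
    ∀ (k : ℕ) (σ : Equiv.Perm ℕ), InSn m σ → (ascF m σ).card ≤ k →
    ∀ (t : ℕ → K), (∀ j, 1 + β * t j ≠ 0) →
      (σ⁻¹ i < σ⁻¹ (i+1) → G (swapVal t i) σ = G t σ) ∧
      (σ⁻¹ (i+1) < σ⁻¹ i →
        C (1 + β * t (i+1)) * G (swapVal t i) σ =
          C (1 + β * t i) * G t σ + C (t i - t (i+1)) * G t (sTr i * σ)) := by
  intro k
  induction k using Nat.strong_induction_on with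
  | _ k IH =>
  intro σ hσ hcard t ht
  by_cases hdec : ∀ j, j + 1 < m → σ (j + 1) < σ j
  · have hrev := eq_revPerm hσ hdec
    subst hrev
    exact key_rev hG hi t ht
  · push_neg at hdec
    obtain ⟨j, hjm, hasc0⟩ := hdec
    have hasc : σ j < σ (j+1) :=
      lt_of_le_of_ne hasc0 (fun h => by have := σ.injective h; omega)
    have hs : ∀ j, 1 + β * swapVal t i j ≠ 0 := swapVal_ne ht i
    set τ := σ * sTr j with hτ_def
    have hτσ : τ * sTr j = σ := by rw [hτ_def, mul_assoc, sTr_mul_self, mul_one]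
    have hτm : InSn m τ := hσ.mul_sTr hjm
    have hτj : τ j = σ (j+1) := by
      rw [hτ_def]
      simp only [Equiv.Perm.mul_apply]
      congr 1
      rw [sTr_apply]; simp
    have hτj1 : τ (j+1) = σ j := by
      rw [hτ_def]
      simp only [Equiv.Perm.mul_apply]
      congr 1
      rw [sTr_apply]; split_ifs <;> omega
    have hτdesc : τ (j+1) < τ j := by rw [hτj, hτj1]; exact hasc
    have hτinv : ∀ x, τ⁻¹ x = sTr j (σ⁻¹ x) := by
      intro x
      rw [hτ_def, mul_inv_rev, Equiv.Perm.mul_apply, sTr_inv]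
    have hcard' : (ascF m τ).card < k :=
      lt_of_lt_of_le (ascF_mul_sTr σ hjm hasc) hcard
    have IHτ := IH _ hcard' τ hτm le_rfl
    have hrt := (hG t ht).2 τ j hτdesc
    rw [hτσ] at hrt
    have hrs := (hG (swapVal t i) hs).2 τ j hτdesc
    rw [hτσ] at hrs
    have hXD : (X j - X (j+1) : MvPolynomial ℕ K) ≠ 0 := X_sub_X_ne _ _ (by omega)
    have hrt' : (X j - X (j+1)) * G t σ =
        (1 + C β * X (j+1)) * G t τ
          - (1 + C β * X j) * rename ⇑(Equiv.swap j (j+1)) (G t τ) := hrt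
    constructor
    · intro hA
      by_cases hb : σ⁻¹ i = j ∧ σ⁻¹ (i+1) = j + 1
      · -- special case: τ = sTr i * σ
        have hσj : σ j = i := by rw [← hb.1, Equiv.Perm.coe_inv, Equiv.apply_symm_apply]
        have hσj1 : σ (j+1) = i + 1 := by rw [← hb.2, Equiv.Perm.coe_inv, Equiv.apply_symm_apply]
        have hτeq : τ = sTr i * σ := by
          ext x
          rw [hτ_def]
          simp only [Equiv.Perm.mul_apply]
          rw [sTr_apply j x]
          split_ifs with h1 h2
          · rw [h1, hσj1, hσj, sTr_apply]; simp
          · rw [h2, hσj, hσj1, sTr_apply]; split_ifs <;> omega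
          · have h1' : σ x ≠ i := fun hc => h1 (by rw [← hb.1, ← hc, Equiv.Perm.coe_inv, Equiv.symm_apply_apply])
            have h2' : σ x ≠ i + 1 :=
              fun hc => h2 (by rw [← hb.2, ← hc, Equiv.Perm.coe_inv, Equiv.symm_apply_apply])
            rw [sTr_apply]; split_ifs <;> omega
        have hτinvlt : τ⁻¹ (i+1) < τ⁻¹ i := by
          rw [hτinv, hτinv, hb.1, hb.2]
          rw [show sTr j (j+1) = j by rw [sTr_apply]; split_ifs <;> omega,
            show sTr j j = j + 1 by rw [sTr_apply]; simp]
          omega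
        have hBt := (IHτ t ht).2 hτinvlt
        have hsiτ : sTr i * τ = σ := by rw [hτeq, sTr_mul_sTr_mul]
        rw [hsiτ] at hBt
        have hsymt : rename ⇑(Equiv.swap j (j+1)) (G t σ) = G t σ := by
          have h2 := congrArg (rename ⇑(Equiv.swap j (j+1))) hrt'
          simp only [map_mul, map_sub, map_add, map_one, rename_X, rename_C,
            Equiv.swap_apply_left, Equiv.swap_apply_right, rename_swap_swap] at h2
          apply mul_left_cancel₀ hXD
          apply calc_sym hrt'
          linear_combination h2
        have hBr : C (1 + β * t (i+1)) * rename ⇑(Equiv.swap j (j+1)) (G (swapVal t i) τ) =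
            C (1 + β * t i) * rename ⇑(Equiv.swap j (j+1)) (G t τ)
              + C (t i - t (i+1)) * G t σ := by
          have h3 := congrArg (rename ⇑(Equiv.swap j (j+1))) hBt
          simpa only [map_add, map_mul, rename_C, hsymt] using h3
        have hCa' : (C (1 + β * t (i+1)) : MvPolynomial ℕ K) ≠ 0 := by
          rw [Ne, MvPolynomial.C_eq_zero]
          exact ht (i+1)
        have ha : (C (1 + β * t i) : MvPolynomial ℕ K)
            - C (t i - t (i+1)) * C β = C (1 + β * t (i+1)) := by
          rw [← map_mul, ← map_sub]
          congr 1
          ring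
        apply mul_left_cancel₀ hCa'
        apply mul_left_cancel₀ hXD
        rw [show (X j - X (j+1)) * (C (1 + β * t (i+1)) * G (swapVal t i) σ)
            = C (1 + β * t (i+1)) * ((X j - X (j+1)) * G (swapVal t i) σ) by ring,
          show (X j - X (j+1)) * (C (1 + β * t (i+1)) * G t σ)
            = C (1 + β * t (i+1)) * ((X j - X (j+1)) * G t σ) by ring]
        exact calc_subB hrs hrt' hBt hBr (by ring) ha
      · have hτlt : τ⁻¹ i < τ⁻¹ (i+1) := by
          rw [hτinv, hτinv]
          exact sTr_lt_of_lt hA hb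
        have hAs := (IHτ t ht).1 hτlt
        have hAr := congrArg (rename ⇑(Equiv.swap j (j+1))) hAs
        apply mul_left_cancel₀ hXD
        exact calc_subA hrs hrt' hAs hAr
    · intro hB
      have hblt : τ⁻¹ (i+1) < τ⁻¹ i := by
        rw [hτinv, hτinv]
        apply sTr_lt_of_lt hB
        rintro ⟨e1, e2⟩
        have f1 : σ j = i + 1 := by rw [← e1, Equiv.Perm.coe_inv, Equiv.apply_symm_apply]
        have f2 : σ (j+1) = i := by rw [← e2, Equiv.Perm.coe_inv, Equiv.apply_symm_apply]
        omega
      have hBt := (IHτ t ht).2 hblt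
      have hρdesc : (sTr i * τ) (j+1) < (sTr i * τ) j := by
        simp only [Equiv.Perm.mul_apply]
        rw [hτj, hτj1]
        apply sTr_lt_of_lt hasc
        rintro ⟨e1, e2⟩
        have f1 : σ⁻¹ i = j := by rw [← e1, Equiv.Perm.coe_inv, Equiv.symm_apply_apply]
        have f2 : σ⁻¹ (i+1) = j + 1 := by rw [← e2, Equiv.Perm.coe_inv, Equiv.symm_apply_apply]
        omega
      have hrρ := (hG t ht).2 (sTr i * τ) j hρdesc
      have hρσ : (sTr i * τ) * sTr j = sTr i * σ := by rw [mul_assoc, hτσ]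
      rw [hρσ] at hrρ
      have hBr : C (1 + β * t (i+1)) * rename ⇑(Equiv.swap j (j+1)) (G (swapVal t i) τ) =
          C (1 + β * t i) * rename ⇑(Equiv.swap j (j+1)) (G t τ)
            + C (t i - t (i+1)) * rename ⇑(Equiv.swap j (j+1)) (G t (sTr i * τ)) := by
        have h3 := congrArg (rename ⇑(Equiv.swap j (j+1))) hBt
        simpa only [map_add, map_mul, rename_C] using h3
      apply mul_left_cancel₀ hXD
      exact calc_caseB hrs hrt' hrρ hBt hBr

lemma key_fin (hG : GrothFamily β G) {i : ℕ} {σ : Equiv.Perm ℕ} (hσ : FinPerm σ)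
    (t : ℕ → K) (ht : ∀ j, 1 + β * t j ≠ 0) :
    (σ⁻¹ i < σ⁻¹ (i+1) → G (swapVal t i) σ = G t σ) ∧
    (σ⁻¹ (i+1) < σ⁻¹ i →
      C (1 + β * t (i+1)) * G (swapVal t i) σ =
        C (1 + β * t i) * G t σ + C (t i - t (i+1)) * G t (sTr i * σ)) := by
  obtain ⟨N, hN⟩ := hσ
  have hσm : InSn (max N (i+2)) σ := InSn.mono hN (le_max_left _ _)
  exact key_main hG (by omega) _ σ hσm le_rfl t ht


lemma extract {G : (ℕ → K) → Equiv.Perm ℕ → MvPolynomial ℕ K} {s : ℕ → K}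
    {S : Finset (Equiv.Perm ℕ)} (hfin : ∀ σ ∈ S, FinPerm σ)
    (hLI : LinearIndependent K fun σ : {σ : Equiv.Perm ℕ // FinPerm σ} => G s σ.1)
    {g : Equiv.Perm ℕ → K} (hsum : ∑ σ ∈ S, C (g σ) * G s σ = 0) :
    ∀ σ ∈ S, g σ = 0 := by
  classical
  intro σ hσ
  set T : Finset {σ : Equiv.Perm ℕ // FinPerm σ} :=
    S.attach.image (fun x => (⟨x.1, hfin x.1 x.2⟩ : {σ : Equiv.Perm ℕ // FinPerm σ})) with hT
  have hinj : ∀ x ∈ S.attach, ∀ y ∈ S.attach,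
      (⟨x.1, hfin x.1 x.2⟩ : {σ : Equiv.Perm ℕ // FinPerm σ}) = ⟨y.1, hfin y.1 y.2⟩ → x = y := by
    intro x _ y _ h
    have := congrArg (fun z : {σ : Equiv.Perm ℕ // FinPerm σ} => z.1) h
    exact Subtype.ext this
  have hsum' : ∑ τ ∈ T, g τ.1 • G s τ.1 = 0 := by
    rw [hT, Finset.sum_image hinj]
    rw [Finset.sum_attach S (fun σ => g σ • G s σ)]
    simpa only [smul_eq_C_mul] using hsum
  have hmem : (⟨σ, hfin σ hσ⟩ : {σ : Equiv.Perm ℕ // FinPerm σ}) ∈ T := by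
    rw [hT]
    exact Finset.mem_image.mpr ⟨⟨σ, hσ⟩, Finset.mem_attach _ _, rfl⟩
  exact linearIndependent_iff'.mp hLI T (fun τ => g τ.1) hsum' ⟨σ, hfin σ hσ⟩ hmem


end Aux

/-- Proposition `indonw` of the paper.  Let `u, v, w ∈ S_n` and
let `s_i` be a simple transposition with `ℓ(s_i w) > ℓ(w)`.  Then `c_{u,v}^{s_i w}`
is given by the stated recurrences, according to whether `ℓ(s_i v) < ℓ(v)` or
`ℓ(s_i v) > ℓ(v)`. -/
theorem structure_constant_recurrence_in_w
    {K : Type*} [Field K] (β : K)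
    (G : (ℕ → K) → Equiv.Perm ℕ → MvPolynomial ℕ K)
    (c : (ℕ → K) → (ℕ → K) → Equiv.Perm ℕ → Equiv.Perm ℕ → Equiv.Perm ℕ → K)
    (hG : GrothFamily β G) (hc : StructConsts β G c)
    (n : ℕ) (u v w : Equiv.Perm ℕ) (hu : InSn n u) (hv : InSn n v) (hw : InSn n w)
    (i : ℕ) (hi : i + 1 < n)
    (hlen : len w < len (sTr i * w))
    (t y : ℕ → K)
    (ht : ∀ j, 1 + β * t j ≠ 0) (hy : ∀ j, 1 + β * y j ≠ 0)
    (htt : t i ≠ t (i + 1))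
    (hLI : LinearIndependent K fun σ : {σ : Equiv.Perm ℕ // FinPerm σ} => G t σ.1)
    (hLI' : LinearIndependent K
      fun σ : {σ : Equiv.Perm ℕ // FinPerm σ} => G (swapVal t i) σ.1) :
    (len (sTr i * v) < len v →
      c t y u v (sTr i * w) =
        -((1 + β * t (i + 1)) / (t i - t (i + 1))) * c (swapVal t i) y u v w
          + ((1 + β * t i) / (t i - t (i + 1))) * c t y u v w
          + c (swapVal t i) y u (sTr i * v) w) ∧
    (len v < len (sTr i * v) →
      c t y u v (sTr i * w) =
        -((1 + β * t i) / (t i - t (i + 1))) * c (swapVal t i) y u v w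
          + ((1 + β * t i) / (t i - t (i + 1))) * c t y u v w) := by
  classical
  have fpu : FinPerm u := ⟨n, hu⟩
  have fpv : FinPerm v := ⟨n, hv⟩
  have fpw : FinPerm w := ⟨n, hw⟩
  have fpsv : FinPerm (sTr i * v) := ⟨n, hv.sTr_mul hi⟩
  have hs : ∀ j, 1 + β * swapVal t i j ≠ 0 := swapVal_ne ht i
  have hwc : w⁻¹ i < w⁻¹ (i + 1) := inv_lt_of_len_lt fpw hlen
  obtain ⟨hfinT, hzeroT, hexpT⟩ := hc t y ht hy u v fpu fpv
  obtain ⟨hfinS, hzeroS, hexpS⟩ := hc (swapVal t i) y hs hy u v fpu fpv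
  obtain ⟨hfinS2, hzeroS2, hexpS2⟩ := hc (swapVal t i) y hs hy u (sTr i * v) fpu fpsv
  set S0 : Finset (Equiv.Perm ℕ) :=
    ((hfinT.toFinset ∪ hfinS.toFinset) ∪ hfinS2.toFinset) ∪ {w} with hS0
  set S : Finset (Equiv.Perm ℕ) := S0 ∪ S0.image (fun σ => sTr i * σ) with hS
  have hS0fin : ∀ σ ∈ S0, FinPerm σ := by
    intro σ hσ
    simp only [hS0, Finset.mem_union, Set.Finite.mem_toFinset, Set.mem_setOf_eq,
      Finset.mem_singleton] at hσ
    rcases hσ with ((h | h) | h) | h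
    · by_contra hcon; exact h (hzeroT σ hcon)
    · by_contra hcon; exact h (hzeroS σ hcon)
    · by_contra hcon; exact h (hzeroS2 σ hcon)
    · exact h ▸ fpw
  have hSfin : ∀ σ ∈ S, FinPerm σ := by
    intro σ hσ
    simp only [hS, Finset.mem_union, Finset.mem_image] at hσ
    rcases hσ with h | ⟨σ0, hσ0, rfl⟩
    · exact hS0fin σ h
    · obtain ⟨N, hN⟩ := hS0fin σ0 hσ0
      exact ⟨max N (i+2), (InSn.mono hN (le_max_left _ _)).sTr_mul (by omega)⟩
  have hSclosed : ∀ σ ∈ S, sTr i * σ ∈ S := by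
    intro σ hσ
    simp only [hS, Finset.mem_union, Finset.mem_image] at hσ ⊢
    rcases hσ with h | ⟨σ0, hσ0, rfl⟩
    · right; exact ⟨σ, h, rfl⟩
    · left; rw [sTr_mul_sTr_mul]; exact hσ0
  have hwS : w ∈ S :=
    Finset.mem_union_left _ (Finset.mem_union_right _ (Finset.mem_singleton_self w))
  have hsubT : Function.support (fun σ => C (c t y u v σ) * G t σ) ⊆ ↑S := by
    intro σ hσ
    simp only [Function.mem_support] at hσ
    have hne : c t y u v σ ≠ 0 := by
      intro h0; rw [h0, map_zero, zero_mul] at hσ; exact hσ rfl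
    simp only [hS, hS0, Finset.coe_union, Set.mem_union, Finset.mem_coe, Finset.mem_union,
      Set.Finite.mem_toFinset, Set.mem_setOf_eq]
    left; left; left; left; exact hne
  have hsubS : Function.support (fun σ => C (c (swapVal t i) y u v σ) * G (swapVal t i) σ)
      ⊆ ↑S := by
    intro σ hσ
    simp only [Function.mem_support] at hσ
    have hne : c (swapVal t i) y u v σ ≠ 0 := by
      intro h0; rw [h0, map_zero, zero_mul] at hσ; exact hσ rfl
    simp only [hS, hS0, Finset.coe_union, Set.mem_union, Finset.mem_coe, Finset.mem_union,
      Set.Finite.mem_toFinset, Set.mem_setOf_eq]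
    left; left; left; right; exact hne
  have hsubS2 : Function.support
      (fun σ => C (c (swapVal t i) y u (sTr i * v) σ) * G (swapVal t i) σ) ⊆ ↑S := by
    intro σ hσ
    simp only [Function.mem_support] at hσ
    have hne : c (swapVal t i) y u (sTr i * v) σ ≠ 0 := by
      intro h0; rw [h0, map_zero, zero_mul] at hσ; exact hσ rfl
    simp only [hS, hS0, Finset.coe_union, Set.mem_union, Finset.mem_coe, Finset.mem_union,
      Set.Finite.mem_toFinset, Set.mem_setOf_eq]
    left; left; right; exact hne
  have hsumT : G y u * G t v = ∑ σ ∈ S, C (c t y u v σ) * G t σ :=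
    hexpT.trans (finsum_eq_sum_of_support_subset _ hsubT)
  have hsumS : G y u * G (swapVal t i) v
      = ∑ σ ∈ S, C (c (swapVal t i) y u v σ) * G (swapVal t i) σ :=
    hexpS.trans (finsum_eq_sum_of_support_subset _ hsubS)
  have hsumS2 : G y u * G (swapVal t i) (sTr i * v)
      = ∑ σ ∈ S, C (c (swapVal t i) y u (sTr i * v) σ) * G (swapVal t i) σ :=
    hexpS2.trans (finsum_eq_sum_of_support_subset _ hsubS2)
  have keyA : ∀ σ : Equiv.Perm ℕ, FinPerm σ → σ⁻¹ i < σ⁻¹ (i+1) →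
      G t σ = G (swapVal t i) σ := by
    intro σ fp h
    have := (key_fin hG fp (swapVal t i) hs).1 h
    rwa [swapVal_swapVal] at this
  have keyB : ∀ σ : Equiv.Perm ℕ, FinPerm σ → σ⁻¹ (i+1) < σ⁻¹ i →
      C (1 + β * t i) * G t σ = C (1 + β * t (i+1)) * G (swapVal t i) σ
        + C (t (i+1) - t i) * G (swapVal t i) (sTr i * σ) := by
    intro σ fp h
    have := (key_fin hG fp (swapVal t i) hs).2 h
    rwa [swapVal_swapVal, swapVal_self, swapVal_succ] at this
  have hcondtri : ∀ σ : Equiv.Perm ℕ, ¬ σ⁻¹ i < σ⁻¹ (i+1) → σ⁻¹ (i+1) < σ⁻¹ i := by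
    intro σ h
    rcases lt_trichotomy (σ⁻¹ i) (σ⁻¹ (i+1)) with hlt | heq | hgt
    · exact absurd hlt h
    · exact absurd (σ⁻¹.injective heq) (by omega)
    · exact hgt
  have hinvsi1 : ∀ σ : Equiv.Perm ℕ, (sTr i * σ)⁻¹ i = σ⁻¹ (i+1) := by
    intro σ
    rw [mul_sTr_inv_apply]
    congr 1
    rw [sTr_apply]; simp
  have hinvsi2 : ∀ σ : Equiv.Perm ℕ, (sTr i * σ)⁻¹ (i+1) = σ⁻¹ i := by
    intro σ
    rw [mul_sTr_inv_apply]
    congr 1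
    rw [sTr_apply]; split_ifs <;> omega
  have hMaster : C (1 + β * t i) * (G y u * G t v) =
      ∑ σ ∈ S, C (if σ⁻¹ i < σ⁻¹ (i+1)
        then (1 + β * t i) * c t y u v σ - (t i - t (i+1)) * c t y u v (sTr i * σ)
        else (1 + β * t (i+1)) * c t y u v σ) * G (swapVal t i) σ := by
    rw [hsumT, Finset.mul_sum]
    have step1 : ∀ σ ∈ S, C (1 + β * t i) * (C (c t y u v σ) * G t σ) =
        C (if σ⁻¹ i < σ⁻¹ (i+1) then (1 + β * t i) * c t y u v σ
            else (1 + β * t (i+1)) * c t y u v σ) * G (swapVal t i) σ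
          + C (if σ⁻¹ i < σ⁻¹ (i+1) then 0 else (t (i+1) - t i) * c t y u v σ)
            * G (swapVal t i) (sTr i * σ) := by
      intro σ hσ
      by_cases hcond : σ⁻¹ i < σ⁻¹ (i+1)
      · rw [if_pos hcond, if_pos hcond, keyA σ (hSfin σ hσ) hcond, map_zero, map_mul]
        ring
      · rw [if_neg hcond, if_neg hcond, map_mul, map_mul]
        have hkb := keyB σ (hSfin σ hσ) (hcondtri σ hcond)
        linear_combination (C (c t y u v σ)) * hkb
    rw [Finset.sum_congr rfl step1, Finset.sum_add_distrib]
    have reindex : (∑ σ ∈ S, C (if σ⁻¹ i < σ⁻¹ (i+1) then (0:K)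
          else (t (i+1) - t i) * c t y u v σ) * G (swapVal t i) (sTr i * σ))
        = ∑ σ ∈ S, C (if σ⁻¹ (i+1) < σ⁻¹ i then (0:K)
          else (t (i+1) - t i) * c t y u v (sTr i * σ)) * G (swapVal t i) σ := by
      refine Finset.sum_nbij' (fun σ => sTr i * σ) (fun σ => sTr i * σ)
        hSclosed hSclosed (fun a _ => sTr_mul_sTr_mul i a) (fun a _ => sTr_mul_sTr_mul i a) ?_
      intro σ hσ
      rw [hinvsi1, hinvsi2, sTr_mul_sTr_mul]
    rw [reindex, ← Finset.sum_add_distrib]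
    apply Finset.sum_congr rfl
    intro σ hσ
    rw [← add_mul, ← map_add]
    congr 1
    by_cases hcond : σ⁻¹ i < σ⁻¹ (i+1)
    · rw [if_pos hcond, if_pos hcond, if_neg (by omega)]
      ring
    · rw [if_neg hcond, if_neg hcond, if_pos (hcondtri σ hcond)]
      ring
  have hd : t i - t (i + 1) ≠ 0 := sub_ne_zero.mpr htt
  constructor
  · intro hv1
    have hvc : v⁻¹ (i+1) < v⁻¹ i := inv_gt_of_len_gt fpv hv1
    have hkbv := keyB v fpv hvc
    have hM2 : C (1 + β * t i) * (G y u * G t v) =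
        ∑ σ ∈ S, C ((1 + β * t (i+1)) * c (swapVal t i) y u v σ
          + (t (i+1) - t i) * c (swapVal t i) y u (sTr i * v) σ) * G (swapVal t i) σ := by
      have e1 : C (1 + β * t i) * (G y u * G t v)
          = C (1 + β * t (i+1)) * (G y u * G (swapVal t i) v)
            + C (t (i+1) - t i) * (G y u * G (swapVal t i) (sTr i * v)) := by
        linear_combination (G y u) * hkbv
      rw [e1, hsumS, hsumS2, Finset.mul_sum, Finset.mul_sum, ← Finset.sum_add_distrib]
      apply Finset.sum_congr rfl
      intro σ hσ
      simp only [map_add, map_mul, map_sub, map_one]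
      ring
    have hdiff := extract hSfin hLI' (g := fun σ =>
      (if σ⁻¹ i < σ⁻¹ (i+1)
        then (1 + β * t i) * c t y u v σ - (t i - t (i+1)) * c t y u v (sTr i * σ)
        else (1 + β * t (i+1)) * c t y u v σ)
      - ((1 + β * t (i+1)) * c (swapVal t i) y u v σ
          + (t (i+1) - t i) * c (swapVal t i) y u (sTr i * v) σ)) ?_ w hwS
    · simp only [if_pos hwc] at hdiff
      have heq : c t y u v (sTr i * w) =
          ((1 + β * t i) * c t y u v w - (1 + β * t (i+1)) * c (swapVal t i) y u v w
            + (t i - t (i+1)) * c (swapVal t i) y u (sTr i * v) w) / (t i - t (i+1)) := by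
        rw [eq_div_iff hd]
        linear_combination -hdiff
      rw [heq]
      field_simp
      ring
    · have : ∀ σ ∈ S,
          C ((if σ⁻¹ i < σ⁻¹ (i+1)
            then (1 + β * t i) * c t y u v σ - (t i - t (i+1)) * c t y u v (sTr i * σ)
            else (1 + β * t (i+1)) * c t y u v σ)
          - ((1 + β * t (i+1)) * c (swapVal t i) y u v σ
              + (t (i+1) - t i) * c (swapVal t i) y u (sTr i * v) σ)) * G (swapVal t i) σ
          = (C (if σ⁻¹ i < σ⁻¹ (i+1)
            then (1 + β * t i) * c t y u v σ - (t i - t (i+1)) * c t y u v (sTr i * σ)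
            else (1 + β * t (i+1)) * c t y u v σ)) * G (swapVal t i) σ
          - (C ((1 + β * t (i+1)) * c (swapVal t i) y u v σ
              + (t (i+1) - t i) * c (swapVal t i) y u (sTr i * v) σ)) * G (swapVal t i) σ := by
        intro σ hσ
        rw [map_sub, sub_mul]
      rw [Finset.sum_congr rfl this, Finset.sum_sub_distrib, ← hMaster, ← hM2, sub_self]
  · intro hv2
    have hvc : v⁻¹ i < v⁻¹ (i+1) := inv_lt_of_len_lt fpv hv2
    have hkav := keyA v fpv hvc
    have hM2 : C (1 + β * t i) * (G y u * G t v) =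
        ∑ σ ∈ S, C ((1 + β * t i) * c (swapVal t i) y u v σ) * G (swapVal t i) σ := by
      rw [hkav, hsumS, Finset.mul_sum]
      apply Finset.sum_congr rfl
      intro σ hσ
      simp only [map_add, map_mul, map_sub, map_one]
      ring
    have hdiff := extract hSfin hLI' (g := fun σ =>
      (if σ⁻¹ i < σ⁻¹ (i+1)
        then (1 + β * t i) * c t y u v σ - (t i - t (i+1)) * c t y u v (sTr i * σ)
        else (1 + β * t (i+1)) * c t y u v σ)
      - (1 + β * t i) * c (swapVal t i) y u v σ) ?_ w hwS
    · simp only [if_pos hwc] at hdiff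
      have heq : c t y u v (sTr i * w) =
          ((1 + β * t i) * c t y u v w - (1 + β * t i) * c (swapVal t i) y u v w)
            / (t i - t (i+1)) := by
        rw [eq_div_iff hd]
        linear_combination -hdiff
      rw [heq]
      field_simp
      ring
    · have : ∀ σ ∈ S,
          C ((if σ⁻¹ i < σ⁻¹ (i+1)
            then (1 + β * t i) * c t y u v σ - (t i - t (i+1)) * c t y u v (sTr i * σ)
            else (1 + β * t (i+1)) * c t y u v σ)
          - (1 + β * t i) * c (swapVal t i) y u v σ) * G (swapVal t i) σ
          = (C (if σ⁻¹ i < σ⁻¹ (i+1)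
            then (1 + β * t i) * c t y u v σ - (t i - t (i+1)) * c t y u v (sTr i * σ)
            else (1 + β * t (i+1)) * c t y u v σ)) * G (swapVal t i) σ
          - (C ((1 + β * t i) * c (swapVal t i) y u v σ)) * G (swapVal t i) σ := by
        intro σ hσ
        rw [map_sub, sub_mul]
      rw [Finset.sum_congr rfl this, Finset.sum_sub_distrib, ← hMaster, ← hM2, sub_self]
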